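/- Let H be a real symmetric positive definite (n+1)×(n+1) matrix, let A be a real (n+1)×(n+1) matrix, let (λ, w) with λ ∈ ℂ, 0 ≠ w ∈ ℂ^{n+1}, satisfy A w = λ w, let ε > 0, and set S' := ε·((H w)(H w)* + (H w̄)(H w̄)*). If w* H w̄ = 0 (i.e. w is H-orthogonal to its own conjugate), then (A + (1/2) H⁻¹ S') w = (λ + (ε/2)·‖w‖²_H) w, where ‖w‖²_H := w* H w; that is, adding the perturbation (1/2) H⁻¹ S' shifts the eigenvalue λ of eigenvector w by the positive real amount (ε/2)‖w‖²_H. -/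
import Mathlib


open Matrix

lemma vecMulVec_mulVec' {m : Type*} [Fintype m] (u v x : m → ℂ) :
    (vecMulVec u v).mulVec x = (v ⬝ᵥ x) • u := by
  funext i
  simp [vecMulVec, mulVec, dotProduct, Finset.mul_sum, mul_assoc, mul_comm, mul_left_comm]

/-- adding `(1/2) H⁻¹ S'` with `S' = ε((Hw)(Hw)* + (Hw̄)(Hw̄)*)` shifts the
eigenvalue `λ` of the eigenvector `w` by `(ε/2)‖w‖²_H`, provided `w* H w̄ = 0`. -/
theorem perturbation_shifts_eigenvalue {n : ℕ}
    (H A : Matrix (Fin (n+1)) (Fin (n+1)) ℝ) (hH : H.PosDef)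
    (lam : ℂ) (w : Fin (n+1) → ℂ) (hw : w ≠ 0)
    (heig : (A.map (fun r => (r : ℂ))).mulVec w = lam • w)
    (ε : ℝ) (hε : 0 < ε)
    (horth : star w ⬝ᵥ (H.map (fun r => (r : ℂ))).mulVec (star w) = 0)
    (S' : Matrix (Fin (n+1)) (Fin (n+1)) ℂ)
    (hS' : S' = (ε : ℂ) •
      (vecMulVec ((H.map (fun r => (r : ℂ))).mulVec w)
          (star ((H.map (fun r => (r : ℂ))).mulVec w)) +
        vecMulVec ((H.map (fun r => (r : ℂ))).mulVec (star w))
          (star ((H.map (fun r => (r : ℂ))).mulVec (star w))))) :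
    (A.map (fun r => (r : ℂ)) + (2 : ℂ)⁻¹ • ((H.map (fun r => (r : ℂ)))⁻¹ * S')).mulVec w =
      (lam + ((ε : ℂ) / 2) * (star w ⬝ᵥ (H.map (fun r => (r : ℂ))).mulVec w)) • w := by
  set Hc := H.map (fun r => (r : ℂ)) with hHc
  -- symmetry of Hc
  have hHsymm : Hcᵀ = Hc := by
    have : Hᵀ = H := hH.isHermitian
    rw [hHc, ← Matrix.transpose_map]
    rw [this]
  -- star commutes with Hc.mulVec
  have hstar : ∀ v : Fin (n+1) → ℂ, star (Hc.mulVec v) = Hc.mulVec (star v) := by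
    intro v
    funext i
    simp [Hc, mulVec, dotProduct, Matrix.map_apply, Complex.conj_ofReal]
  -- first coefficient
  have h1 : star (Hc.mulVec w) ⬝ᵥ w = star w ⬝ᵥ Hc.mulVec w := by
    rw [hstar, Matrix.dotProduct_mulVec, ← Matrix.mulVec_transpose, hHsymm,
      dotProduct_comm]
  -- second coefficient vanishes
  have h2 : star (Hc.mulVec (star w)) ⬝ᵥ w = 0 := by
    have h := congrArg star horth
    rw [star_zero, ← Matrix.star_dotProduct_star, star_star] at h
    exact h
  -- invertibility
  have hdet : IsUnit Hc.det := by
    have : Hc.det = (H.det : ℂ) := (RingHom.map_det (algebraMap ℝ ℂ) H).symm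
    rw [this]
    simp only [isUnit_iff_ne_zero, ne_eq, Complex.ofReal_eq_zero]
    exact ne_of_gt hH.det_pos
  have hinv : Hc⁻¹ * Hc = 1 := Matrix.nonsing_inv_mul Hc hdet
  -- compute S'.mulVec w
  have hSw : S'.mulVec w = ((ε : ℂ) * (star w ⬝ᵥ Hc.mulVec w)) • Hc.mulVec w := by
    rw [hS', Matrix.smul_mulVec, Matrix.add_mulVec, vecMulVec_mulVec',
      vecMulVec_mulVec', h1, h2, zero_smul, add_zero, smul_smul]
  calc (A.map (fun r => (r : ℂ)) + (2 : ℂ)⁻¹ • (Hc⁻¹ * S')).mulVec w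
      = lam • w + (2 : ℂ)⁻¹ • (Hc⁻¹.mulVec (S'.mulVec w)) := by
        rw [Matrix.add_mulVec, heig, Matrix.smul_mulVec, ← Matrix.mulVec_mulVec]
    _ = lam • w + (2 : ℂ)⁻¹ • (((ε : ℂ) * (star w ⬝ᵥ Hc.mulVec w)) • w) := by
        rw [hSw, Matrix.mulVec_smul, Matrix.mulVec_mulVec, hinv, Matrix.one_mulVec]
    _ = (lam + ((ε : ℂ) / 2) * (star w ⬝ᵥ Hc.mulVec w)) • w := by
        rw [add_smul, smul_smul]; ring_nf
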